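/- Let A ∈ ℝ^{m×n}, C ∈ ℝ^{p×n}, G = AᵀA + CᵀC. Then (P_{R(G)} − C_A† C) A† = A_{N(C)}†, i.e., for every b ∈ ℝᵐ, the vector (P_{R(G)} − C_A† C) A† b is the minimum 2-norm minimizer of ‖Ax − b‖₂ over x ∈ N(C). -/

import Mathlib

open Matrix

open RealInnerProductSpace in
private lemma inner_zero_of_min' {E : Type*} [NormedAddCommGroup E] [InnerProductSpace ℝ E]
    {c d : E} (h : ∀ t : ℝ, ‖c‖ ≤ ‖c + t • d‖) : ⟪c, d⟫ = 0 := by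
  have key : ∀ t : ℝ, 0 ≤ 2 * (t * ⟪c, d⟫) + t ^ 2 * ‖d‖ ^ 2 := by
    intro t
    have h1 := h t
    have h2 : ‖c‖ ^ 2 ≤ ‖c + t • d‖ ^ 2 := by
      have := norm_nonneg c; nlinarith [norm_nonneg (c + t • d)]
    rw [norm_add_sq_real, real_inner_smul_right, norm_smul, mul_pow, Real.norm_eq_abs,
      sq_abs] at h2
    linarith
  have hd : (0:ℝ) < ‖d‖ ^ 2 + 1 := by positivity
  have ht := key (-(⟪c, d⟫ / (‖d‖ ^ 2 + 1)))
  have hne : (‖d‖ ^ 2 + 1) ≠ 0 := by positivity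
  set r : ℝ := ⟪c, d⟫ with hr
  set s : ℝ := ‖d‖ ^ 2 with hs
  have expand : 2 * (-(r / (s + 1)) * r) + (-(r / (s + 1))) ^ 2 * s
      = (-2 * r ^ 2 * (s + 1) + r ^ 2 * s) / (s + 1) ^ 2 := by
    field_simp
  rw [expand] at ht
  have h3 : 0 ≤ -2 * r ^ 2 * (s + 1) + r ^ 2 * s := by
    rcases div_nonneg_iff.mp ht with ⟨h, _⟩ | ⟨h, hneg⟩
    · exact h
    · nlinarith [sq_nonneg (s + 1)]
  nlinarith [sq_nonneg r, hs ▸ sq_nonneg ‖d‖]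

private lemma sq_le_imp {a b : ℝ} (_ha : 0 ≤ a) (hb : 0 ≤ b) (h : a ^ 2 ≤ b ^ 2) : a ≤ b := by
  nlinarith

set_option maxHeartbeats 1000000 in
/-- `(P_{R(G)} − C_A† C) A† = A_{N(C)}†`: for every `b`, the vector
`P_{R(G)}(A†b) − C_A†(C A†b)` is the minimum 2-norm minimizer of `‖Ax − b‖` over `N(C)`. -/
theorem pinv_identity_two (m n p : ℕ) (A : Matrix (Fin m) (Fin n) ℝ)
    (C : Matrix (Fin p) (Fin n) ℝ)
    (Adag : EuclideanSpace ℝ (Fin m) → EuclideanSpace ℝ (Fin n))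
    (hAdag : ∀ b : EuclideanSpace ℝ (Fin m),
      (∀ y, ‖Matrix.toEuclideanLin A (Adag b) - b‖ ≤ ‖Matrix.toEuclideanLin A y - b‖) ∧
      (∀ y, (∀ z, ‖Matrix.toEuclideanLin A y - b‖ ≤ ‖Matrix.toEuclideanLin A z - b‖) →
        ‖Adag b‖ ≤ ‖y‖))
    (CAdag : EuclideanSpace ℝ (Fin p) → EuclideanSpace ℝ (Fin n))
    (hCAdag : ∀ d : EuclideanSpace ℝ (Fin p),
      (∀ y, ‖Matrix.toEuclideanLin C (CAdag d) - d‖ ≤ ‖Matrix.toEuclideanLin C y - d‖) ∧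
      (∀ y, (∀ z, ‖Matrix.toEuclideanLin C y - d‖ ≤ ‖Matrix.toEuclideanLin C z - d‖) →
        ‖Matrix.toEuclideanLin A (CAdag d)‖ ≤ ‖Matrix.toEuclideanLin A y‖) ∧
      (∀ y, ((∀ z, ‖Matrix.toEuclideanLin C y - d‖ ≤ ‖Matrix.toEuclideanLin C z - d‖) ∧
          (∀ z, (∀ w, ‖Matrix.toEuclideanLin C z - d‖ ≤ ‖Matrix.toEuclideanLin C w - d‖) →
            ‖Matrix.toEuclideanLin A y‖ ≤ ‖Matrix.toEuclideanLin A z‖)) → ‖CAdag d‖ ≤ ‖y‖)) :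
    ∀ b : EuclideanSpace ℝ (Fin m),
      ((↑(Submodule.orthogonalProjection
            (LinearMap.range (Matrix.toEuclideanLin (Aᵀ * A + Cᵀ * C))) (Adag b)) :
          EuclideanSpace ℝ (Fin n)) - CAdag (Matrix.toEuclideanLin C (Adag b)))
        ∈ LinearMap.ker (Matrix.toEuclideanLin C) ∧
      (∀ v ∈ LinearMap.ker (Matrix.toEuclideanLin C),
        ‖Matrix.toEuclideanLin A
            ((↑(Submodule.orthogonalProjection
                  (LinearMap.range (Matrix.toEuclideanLin (Aᵀ * A + Cᵀ * C))) (Adag b)) :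
                EuclideanSpace ℝ (Fin n)) - CAdag (Matrix.toEuclideanLin C (Adag b))) - b‖ ≤
          ‖Matrix.toEuclideanLin A v - b‖) ∧
      (∀ v ∈ LinearMap.ker (Matrix.toEuclideanLin C),
        (∀ w ∈ LinearMap.ker (Matrix.toEuclideanLin C),
          ‖Matrix.toEuclideanLin A v - b‖ ≤ ‖Matrix.toEuclideanLin A w - b‖) →
        ‖(↑(Submodule.orthogonalProjection
              (LinearMap.range (Matrix.toEuclideanLin (Aᵀ * A + Cᵀ * C))) (Adag b)) :
            EuclideanSpace ℝ (Fin n)) - CAdag (Matrix.toEuclideanLin C (Adag b))‖ ≤ ‖v‖) := by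
  intro b
  open RealInnerProductSpace in
  set LA := Matrix.toEuclideanLin A with hLA
  set LC := Matrix.toEuclideanLin C with hLC
  set LG := Matrix.toEuclideanLin (Aᵀ * A + Cᵀ * C) with hLG
  set K := LinearMap.range LG with hK
  obtain ⟨hA1, hA2⟩ := hAdag b
  set u := Adag b with hu
  set d := LC u with hd
  obtain ⟨hC1, hC2, hC3⟩ := hCAdag d
  set w := CAdag d with hw
  set Pu := (↑(Submodule.orthogonalProjection K u) : EuclideanSpace ℝ (Fin n)) with hPu
  -- residual of the least-squares problem for A is orthogonal to range A
  have rA : ∀ y, ⟪LA u - b, LA y⟫ = 0 := by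
    intro y
    apply inner_zero_of_min'
    intro t
    have e : LA (u + t • y) - b = (LA u - b) + t • LA y := by
      rw [map_add, LinearMap.map_smul]; abel
    have := hA1 (u + t • y)
    rwa [e] at this
  -- C w = d
  have hCw : LC w = d := by
    have h0 := hC1 u
    rw [← hd, sub_self, norm_zero] at h0
    exact sub_eq_zero.mp (norm_le_zero_iff.mp h0)
  -- w minimizes ‖A y‖ among solutions of C y = d
  have hminA : ∀ y, LC y = d → ‖LA w‖ ≤ ‖LA y‖ := by
    intro y hy
    exact hC2 y (fun z => by rw [hy, sub_self, norm_zero]; exact norm_nonneg _)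
  -- w is orthogonal to N(A) ∩ N(C)
  have hwperp : ∀ z, LA z = 0 → LC z = 0 → ⟪w, z⟫ = 0 := by
    intro z hAz hCz
    apply inner_zero_of_min'
    intro t
    apply hC3
    constructor
    · intro z'
      have hCz' : LC (w + t • z) = d := by rw [map_add, LinearMap.map_smul, hCz, smul_zero, add_zero, hCw]
      rw [hCz', sub_self, norm_zero]; exact norm_nonneg _
    · intro z' hz'
      have hAz' : LA (w + t • z) = LA w := by
        rw [map_add, LinearMap.map_smul, hAz, smul_zero, add_zero]
      rw [hAz']
      exact hC2 z' hz'
  -- structure of G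
  have hGapp : ∀ x, LG x = Matrix.toEuclideanLin Aᵀ (LA x) + Matrix.toEuclideanLin Cᵀ (LC x) := by
    intro x
    rw [hLG, hLA, hLC]
    simp [Matrix.toEuclideanLin_apply, Matrix.add_mulVec, Matrix.mulVec_mulVec]
  have hAT : ∀ (z : EuclideanSpace ℝ (Fin m)) y, ⟪Matrix.toEuclideanLin Aᵀ z, y⟫ = ⟪z, LA y⟫ := by
    intro z y
    rw [← Matrix.conjTranspose_eq_transpose_of_trivial,
      Matrix.toEuclideanLin_conjTranspose_eq_adjoint, hLA]
    exact LinearMap.adjoint_inner_left _ _ _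
  have hCT : ∀ (z : EuclideanSpace ℝ (Fin p)) y, ⟪Matrix.toEuclideanLin Cᵀ z, y⟫ = ⟪z, LC y⟫ := by
    intro z y
    rw [← Matrix.conjTranspose_eq_transpose_of_trivial,
      Matrix.toEuclideanLin_conjTranspose_eq_adjoint, hLC]
    exact LinearMap.adjoint_inner_left _ _ _
  have hGinner : ∀ x y, ⟪LG x, y⟫ = ⟪LA x, LA y⟫ + ⟪LC x, LC y⟫ := by
    intro x y
    rw [hGapp, inner_add_left, hAT, hCT]
  -- kernel of G
  have hker0 : ∀ x, ⟪LG x, x⟫ = 0 → LA x = 0 ∧ LC x = 0 := by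
    intro x hx
    rw [hGinner, real_inner_self_eq_norm_sq, real_inner_self_eq_norm_sq] at hx
    have h1 : ‖LA x‖ = 0 := by nlinarith [norm_nonneg (LA x), norm_nonneg (LC x)]
    have h2 : ‖LC x‖ = 0 := by nlinarith [norm_nonneg (LA x), norm_nonneg (LC x)]
    exact ⟨norm_eq_zero.mp h1, norm_eq_zero.mp h2⟩
  have hker' : ∀ x, LA x = 0 → LC x = 0 → LG x = 0 := by
    intro x h1 h2
    have : ⟪LG x, LG x⟫ = 0 := by
      rw [hGinner, h1, h2, inner_zero_left, inner_zero_left, add_zero]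
    exact inner_self_eq_zero.mp this
  -- membership in Kᗮ
  have hperp : ∀ x, LG x = 0 → x ∈ Kᗮ := by
    intro x hx
    intro v hv
    obtain ⟨y, rfl⟩ := hv
    have h1 : LA x = 0 ∧ LC x = 0 := by
      by_cases hAx : LA x = 0 ∧ LC x = 0
      · exact hAx
      · exact hker0 x (by rw [hx, inner_zero_left])
    rw [hGinner, h1.1, h1.2, inner_zero_right, inner_zero_right, add_zero]
  -- u - Pu is in N(A) ∩ N(C)
  have hres : u - Pu ∈ Kᗮ := Submodule.sub_starProjection_mem_orthogonal (K := K) u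
  have hresAC : LA (u - Pu) = 0 ∧ LC (u - Pu) = 0 := by
    apply hker0
    exact hres (LG (u - Pu)) ⟨u - Pu, rfl⟩
  have hLAPu : LA Pu = LA u := by
    have := hresAC.1; rw [map_sub, sub_eq_zero] at this; exact this.symm
  have hLCPu : LC Pu = d := by
    have := hresAC.2; rw [map_sub, sub_eq_zero] at this; rw [← this, ← hd]
  -- C (Pu - w) = 0
  have hCx : LC (Pu - w) = 0 := by rw [map_sub, hLCPu, hCw, sub_self]
  have hAx : LA (Pu - w) = LA u - LA w := by rw [map_sub, hLAPu]
  -- residual decomposition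
  have key : ∀ x, ‖LA x - b‖ ^ 2 = ‖LA u - b‖ ^ 2 + ‖LA x - LA u‖ ^ 2 := by
    intro x
    have e : LA x - b = (LA u - b) + (LA x - LA u) := by abel
    rw [e, norm_add_sq_real]
    have h0 : ⟪LA u - b, LA x - LA u⟫ = 0 := by rw [← map_sub]; exact rA _
    rw [h0]; ring
  have hxs_res : ‖LA (Pu - w) - b‖ ^ 2 = ‖LA u - b‖ ^ 2 + ‖LA w‖ ^ 2 := by
    rw [key (Pu - w), hAx, show LA u - LA w - LA u = -(LA w) by abel, norm_neg]
  -- clause 2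
  have min2 : ∀ v, LC v = 0 → ‖LA (Pu - w) - b‖ ≤ ‖LA v - b‖ := by
    intro v hv
    have h1 : ‖LA w‖ ≤ ‖LA (u - v)‖ :=
      hminA (u - v) (by rw [map_sub, hv, sub_zero, ← hd])
    have h2 := key v
    have h3 : ‖LA v - LA u‖ = ‖LA (u - v)‖ := by
      rw [← norm_neg, show -(LA v - LA u) = LA u - LA v by abel, ← map_sub]
    apply sq_le_imp (norm_nonneg _) (norm_nonneg _)
    rw [hxs_res, h2, h3]
    nlinarith [norm_nonneg (LA w), norm_nonneg (LA (u - v))]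
  refine ⟨LinearMap.mem_ker.mpr hCx, fun v hv => min2 v (LinearMap.mem_ker.mp hv), ?_⟩
  -- clause 3
  intro v hv hopt
  have hv0 : LC v = 0 := LinearMap.mem_ker.mp hv
  have hvle : ‖LA v - b‖ ≤ ‖LA (Pu - w) - b‖ := hopt (Pu - w) (LinearMap.mem_ker.mpr hCx)
  have heq : ‖LA v - b‖ = ‖LA (Pu - w) - b‖ := le_antisymm hvle (min2 v hv0)
  -- midpoint argument: A(Pu - w) = A v
  have hmid0 : LC ((2:ℝ)⁻¹ • ((Pu - w) + v)) = 0 := by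
    rw [LinearMap.map_smul, map_add, hCx, hv0, add_zero, smul_zero]
  have h4 := min2 _ hmid0
  have emid : LA ((2:ℝ)⁻¹ • ((Pu - w) + v)) - b
      = (2:ℝ)⁻¹ • ((LA (Pu - w) - b) + (LA v - b)) := by
    rw [LinearMap.map_smul, map_add]
    module
  have hALA : LA (Pu - w) = LA v := by
    set X := LA (Pu - w) - b with hX
    set Y := LA v - b with hY
    have par := parallelogram_law_with_norm ℝ X Y
    have hm : 2 * ‖X‖ ≤ ‖X + Y‖ := by
      have h4' := h4
      rw [emid, norm_smul, Real.norm_eq_abs, abs_of_pos (by norm_num : (0:ℝ) < (2:ℝ)⁻¹)]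
        at h4'
      linarith
    have h2 : (2 * ‖X‖) * (2 * ‖X‖) ≤ ‖X + Y‖ * ‖X + Y‖ :=
      mul_le_mul hm hm (by positivity) (norm_nonneg _)
    have hYX : ‖Y‖ = ‖X‖ := heq
    clear_value X Y
    have hyy : ‖Y‖ * ‖Y‖ = ‖X‖ * ‖X‖ := by rw [hYX]
    have hq : ‖X - Y‖ * ‖X - Y‖ ≤ 0 := by nlinarith [par, h2, hyy]
    have hn : ‖X - Y‖ = 0 := mul_self_eq_zero.mp (le_antisymm hq (mul_self_nonneg _))
    have h0 : X - Y = 0 := norm_eq_zero.mp hn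
    have h5 : LA (Pu - w) - LA v = 0 := by
      rw [show LA (Pu - w) - LA v = X - Y by rw [hX, hY]; abel, h0]
    exact sub_eq_zero.mp h5
  -- z := v - (Pu - w) ∈ N(A) ∩ N(C)
  set z := v - (Pu - w) with hz
  have hzA : LA z = 0 := by rw [hz, map_sub, hALA, sub_self]
  have hzC : LC z = 0 := by rw [hz, map_sub, hv0, hCx, sub_self]
  -- Pu - w is orthogonal to z
  have hzK : z ∈ Kᗮ := hperp z (hker' z hzA hzC)
  have hp1 : ⟪Pu, z⟫ = 0 := hzK Pu (Submodule.orthogonalProjection K u).2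
  have hp2 : ⟪w, z⟫ = 0 := hwperp z hzA hzC
  have hsum : ⟪Pu - w, z⟫ = 0 := by rw [inner_sub_left, hp1, hp2, sub_self]
  have hnorm : ‖v‖ ^ 2 = ‖Pu - w‖ ^ 2 + ‖z‖ ^ 2 := by
    have e : v = (Pu - w) + z := by rw [hz]; abel
    calc ‖v‖ ^ 2 = ‖(Pu - w) + z‖ ^ 2 := by rw [← e]
    _ = ‖Pu - w‖ ^ 2 + 2 * ⟪Pu - w, z⟫ + ‖z‖ ^ 2 := norm_add_sq_real _ _
    _ = ‖Pu - w‖ ^ 2 + ‖z‖ ^ 2 := by rw [hsum]; ring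
  have h7 : ‖Pu - w‖ ^ 2 ≤ ‖v‖ ^ 2 := by
    rw [hnorm]; exact le_add_of_nonneg_right (sq_nonneg ‖z‖)
  exact sq_le_imp (norm_nonneg _) (norm_nonneg _) h7
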